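/- Consider the periodic game with period 2 given by the 1×2 payoff matrices A_t = [1, −1] for t odd and A_t = [−1, 1] for t even, with x_t ∈ ℝ and y_t ∈ ℝ². For every step size η > 0 and all momentum parameters β₁ ≤ 0 and β₂ ≤ 0, there exist initial conditions (x_0, y_0, x_{−1}, y_{−1}) ∈ ℝ × ℝ² × ℝ × ℝ², a constant c > 0 and a real number λ > 1 such that the negative-momentum iterates satisfy sup_{s ∈ {1,...,t}} ( ‖A_iᵀ x_s‖₂ + ‖A_i y_s‖₂ ) ≥ c·λ^t for all t ≥ 1 and for both i ∈ {1, 2} (where A_1 = [1,−1] and A_2 = [−1,1]). -/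

import Mathlib

open Matrix Filter

/-- Euclidean norm of a real vector. -/
noncomputable def vnorm2 {ι : Type*} [Fintype ι] (v : ι → ℝ) : ℝ :=
  Real.sqrt (∑ i, v i ^ 2)

/-- The negative-momentum (NM) iterative matrix
`M_NM(A', A) = [[(1+β₁)I, −ηA, −β₁I, 0], [η(1+β₁)A'ᵀ, (1+β₂)I − η²A'ᵀA, −ηβ₁A'ᵀ, −β₂I],
[I, 0, 0, 0], [0, I, 0, 0]]`. -/
noncomputable def MNM {n m : ℕ} (η β₁ β₂ : ℝ) (A' A : Matrix (Fin n) (Fin m) ℝ) :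
    Matrix ((Fin n ⊕ Fin m) ⊕ (Fin n ⊕ Fin m)) ((Fin n ⊕ Fin m) ⊕ (Fin n ⊕ Fin m)) ℝ :=
  fromBlocks
    (fromBlocks ((1 + β₁) • 1) ((-η) • A)
      ((η * (1 + β₁)) • A'ᵀ) ((1 + β₂) • 1 - (η ^ 2) • (A'ᵀ * A)))
    (fromBlocks ((-β₁) • 1) 0 ((-(η * β₁)) • A'ᵀ) ((-β₂) • 1))
    1 0

/-- `A₁ = [1, −1]`. -/
noncomputable def A1 : Matrix (Fin 1) (Fin 2) ℝ := !![1, -1]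

/-- `A₂ = [−1, 1]`. -/
noncomputable def A2 : Matrix (Fin 1) (Fin 2) ℝ := !![-1, 1]

/-- Period-2 game: `A_t = A₁` for odd `t`, `A_t = A₂` for even `t`. -/
noncomputable def Aper (t : ℕ) : Matrix (Fin 1) (Fin 2) ℝ := if t % 2 = 1 then A1 else A2

/-- `Δ_i` for state `Z = (x_t, y_t, x_{t-1}, y_{t-1})`: `‖Bᵀ x_t‖₂ + ‖B y_t‖₂`. -/
noncomputable def Delta (B : Matrix (Fin 1) (Fin 2) ℝ)
    (Z : ((Fin 1 ⊕ Fin 2) ⊕ (Fin 1 ⊕ Fin 2)) → ℝ) : ℝ :=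
  vnorm2 (Bᵀ.mulVec fun j => Z (Sum.inl (Sum.inl j))) +
    vnorm2 (B.mulVec fun j => Z (Sum.inl (Sum.inr j)))

set_option maxHeartbeats 4000000 in
/-- Auxiliary: a monic quartic is nonnegative somewhere far out. -/
lemma quartic_big (c3 c2 c1 c0 : ℝ) :
    ∃ M : ℝ, 1 ≤ M ∧ 0 ≤ M^4 - c3*M^3 + c2*M^2 - c1*M + c0 := by
  set S : ℝ := |c3| + |c2| + |c1| + |c0| with hS
  have hS0 : 0 ≤ S := by positivity
  refine ⟨1 + S, by linarith, ?_⟩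
  set M : ℝ := 1 + S with hM
  have h1 : 1 ≤ M := by linarith
  have h0 : 0 ≤ M := by linarith
  have hm0 : 1 ≤ M^3 := one_le_pow₀ h1
  have h0' : (0:ℝ) ≤ M^3 := by linarith
  have hsq : 1 ≤ M^2 := one_le_pow₀ h1
  have hm1 : M ≤ M^3 := by nlinarith
  have hm2 : M^2 ≤ M^3 := by nlinarith
  have e3 : -(c3 * M^3) ≥ -(|c3| * M^3) := by nlinarith [le_abs_self c3]
  have e2 : c2 * M^2 ≥ -(|c2| * M^3) := by nlinarith [neg_abs_le c2, pow_nonneg h0 2, abs_nonneg c2]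
  have e1 : -(c1 * M) ≥ -(|c1| * M^3) := by nlinarith [le_abs_self c1, abs_nonneg c1]
  have e0 : c0 ≥ -(|c0| * M^3) := by nlinarith [neg_abs_le c0, abs_nonneg c0]
  have key : M^4 - S * M^3 = M^3 * (M - S) := by ring
  have hMS : M - S = 1 := by rw [hM]; ring
  nlinarith [mul_le_mul_of_nonneg_right h1 h0']

/-- Auxiliary: the characteristic quartic of the NM dynamics has a real root `< -1`. -/
lemma exists_root (η β₁ β₂ : ℝ) (hη : 0 < η) :
    ∃ r : ℝ, r < -1 ∧
      (r-1)*(r-β₁)*(r^2+(1+β₂+2*η^2)*r+β₂) + 2*η^2*r*((1+β₁)*r-β₁) = 0 := by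
  set f : ℝ → ℝ := fun r =>
    (r-1)*(r-β₁)*(r^2+(1+β₂+2*η^2)*r+β₂) + 2*η^2*r*((1+β₁)*r-β₁) with hf
  have hcont : Continuous f := by fun_prop
  have hf1 : f (-1) = -2*η^2 := by simp only [hf]; ring
  have hf1' : f (-1) < 0 := by rw [hf1]; nlinarith
  obtain ⟨M, hM1, hM⟩ := quartic_big ((1+β₂+2*η^2) - (1+β₁))
    (β₂ - (1+β₁)*(1+β₂+2*η^2) + β₁ + 2*η^2*(1+β₁))
    (-(1+β₁)*β₂ + β₁*(1+β₂+2*η^2) - 2*η^2*β₁) (β₁*β₂)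
  have hfM : 0 ≤ f (-M) := by
    have : f (-M) = M^4 - ((1+β₂+2*η^2) - (1+β₁))*M^3 +
        (β₂ - (1+β₁)*(1+β₂+2*η^2) + β₁ + 2*η^2*(1+β₁))*M^2 -
        (-(1+β₁)*β₂ + β₁*(1+β₂+2*η^2) - 2*η^2*β₁)*M + β₁*β₂ := by
      simp only [hf]; ring
    rw [this]; exact hM
  have hle : (-M : ℝ) ≤ -1 := by linarith
  have hmem : (0:ℝ) ∈ Set.Icc (f (-1)) (f (-M)) := ⟨le_of_lt hf1', hfM⟩
  obtain ⟨r, hr, hr0⟩ := intermediate_value_Icc' hle hcont.continuousOn hmem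
  refine ⟨r, ?_, hr0⟩
  rcases lt_or_eq_of_le hr.2 with h | h
  · exact h
  · exfalso; rw [h] at hr0; rw [hr0] at hf1'; exact lt_irrefl 0 hf1'

set_option maxHeartbeats 2000000 in
/-- In the period-2 game `A₁ = [1,−1]` (odd rounds), `A₂ = [−1,1]` (even rounds), for every
step size `η > 0` and momentum parameters `β₁ ≤ 0`, `β₂ ≤ 0`, there are initial conditions
(encoded in `Z 0`), a constant `c > 0` and `λ > 1` such that the negative-momentum iterates
`Z_{t+1} = M_NM(A_{t+1}, A_t) Z_t` satisfy `sup_{s ∈ {1,…,t}} Δ_{i,s} ≥ c·λ^t` for all `t ≥ 1`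
and both `i ∈ {1,2}`. -/
theorem stmt2 (η β₁ β₂ : ℝ) (hη : 0 < η) (hβ₁ : β₁ ≤ 0) (hβ₂ : β₂ ≤ 0) :
    ∃ Z : ℕ → (((Fin 1 ⊕ Fin 2) ⊕ (Fin 1 ⊕ Fin 2)) → ℝ),
      (∀ t, Z (t + 1) = (MNM η β₁ β₂ (Aper (t + 1)) (Aper t)).mulVec (Z t)) ∧
      ∃ c > (0 : ℝ), ∃ lam : ℝ, 1 < lam ∧
        ∀ (t : ℕ) (ht : 1 ≤ t),
          c * lam ^ t ≤
              (Finset.Icc 1 t).sup' (Finset.nonempty_Icc.mpr ht) (fun s => Delta A1 (Z s)) ∧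
          c * lam ^ t ≤
              (Finset.Icc 1 t).sup' (Finset.nonempty_Icc.mpr ht) (fun s => Delta A2 (Z s)) := by
  obtain ⟨r, hr, hroot⟩ := exists_root η β₁ β₂ hη
  have hr0 : r < 0 := by linarith
  have hrne : r ≠ 0 := ne_of_lt hr0
  set Z : ℕ → (((Fin 1 ⊕ Fin 2) ⊕ (Fin 1 ⊕ Fin 2)) → ℝ) := fun (t : ℕ) =>
    (Sum.elim (Sum.elim (fun (_ : Fin 1) => (η*r)*r^t)
        (fun j => (if j = (0 : Fin 2) then (1:ℝ) else -1) * (-(-1:ℝ)^t * (-(r^2 - (1+β₁)*r + β₁)) * r^t / 2)))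
      (Sum.elim (fun (_ : Fin 1) => (η*r)*r^t/r)
        (fun j => (if j = (0 : Fin 2) then (1:ℝ) else -1) * ((-1:ℝ)^t * (-(r^2 - (1+β₁)*r + β₁)) * r^t / (2*r))))) with hZdef
  refine ⟨Z, ?_, ?_⟩
  · intro t
    rcases Nat.even_or_odd t with hpar | hpar
    · have h2 : t % 2 = 0 := Nat.even_iff.mp hpar
      have h2' : (t+1) % 2 = 1 := by omega
      have hn : (-1:ℝ)^t = 1 := hpar.neg_one_pow
      have hn' : (-1:ℝ)^(t+1) = -1 := by rw [pow_succ, hn]; ring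
      funext i
      rcases i with (i|j)|(i|j)
      · fin_cases i
        simp [hZdef, MNM, Aper, h2, h2', A1, A2, Matrix.mulVec, dotProduct,
          Fintype.sum_sum_type, Fin.sum_univ_two, Fin.sum_univ_one, hn, hn',
          Matrix.fromBlocks, Matrix.mul_apply]
        field_simp
        ring
      · fin_cases j
        · simp [hZdef, MNM, Aper, h2, h2', A1, A2, Matrix.mulVec, dotProduct,
            Fintype.sum_sum_type, Fin.sum_univ_two, Fin.sum_univ_one, hn, hn',
            Matrix.fromBlocks, Matrix.mul_apply]
          field_simp
          linear_combination (-r^t) * hroot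
        · simp [hZdef, MNM, Aper, h2, h2', A1, A2, Matrix.mulVec, dotProduct,
            Fintype.sum_sum_type, Fin.sum_univ_two, Fin.sum_univ_one, hn, hn',
            Matrix.fromBlocks, Matrix.mul_apply]
          field_simp
          linear_combination (r^t) * hroot
      · fin_cases i
        simp [hZdef, MNM, Aper, h2, h2', A1, A2, Matrix.mulVec, dotProduct,
          Fintype.sum_sum_type, Fin.sum_univ_two, Fin.sum_univ_one, hn, hn',
          Matrix.fromBlocks, Matrix.mul_apply]
        field_simp
        ring
      · fin_cases j <;>
        · simp [hZdef, MNM, Aper, h2, h2', A1, A2, Matrix.mulVec, dotProduct,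
            Fintype.sum_sum_type, Fin.sum_univ_two, Fin.sum_univ_one, hn, hn',
            Matrix.fromBlocks, Matrix.mul_apply]
          field_simp
          ring
    · have h2 : t % 2 = 1 := Nat.odd_iff.mp hpar
      have h2' : (t+1) % 2 = 0 := by omega
      have hn : (-1:ℝ)^t = -1 := hpar.neg_one_pow
      have hn' : (-1:ℝ)^(t+1) = 1 := by rw [pow_succ, hn]; ring
      funext i
      rcases i with (i|j)|(i|j)
      · fin_cases i
        simp [hZdef, MNM, Aper, h2, h2', A1, A2, Matrix.mulVec, dotProduct,
          Fintype.sum_sum_type, Fin.sum_univ_two, Fin.sum_univ_one, hn, hn',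
          Matrix.fromBlocks, Matrix.mul_apply]
        field_simp
        ring
      · fin_cases j
        · simp [hZdef, MNM, Aper, h2, h2', A1, A2, Matrix.mulVec, dotProduct,
            Fintype.sum_sum_type, Fin.sum_univ_two, Fin.sum_univ_one, hn, hn',
            Matrix.fromBlocks, Matrix.mul_apply]
          field_simp
          linear_combination (r^t) * hroot
        · simp [hZdef, MNM, Aper, h2, h2', A1, A2, Matrix.mulVec, dotProduct,
            Fintype.sum_sum_type, Fin.sum_univ_two, Fin.sum_univ_one, hn, hn',
            Matrix.fromBlocks, Matrix.mul_apply]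
          field_simp
          linear_combination (-r^t) * hroot
      · fin_cases i
        simp [hZdef, MNM, Aper, h2, h2', A1, A2, Matrix.mulVec, dotProduct,
          Fintype.sum_sum_type, Fin.sum_univ_two, Fin.sum_univ_one, hn, hn',
          Matrix.fromBlocks, Matrix.mul_apply]
        field_simp
        ring
      · fin_cases j <;>
        · simp [hZdef, MNM, Aper, h2, h2', A1, A2, Matrix.mulVec, dotProduct,
            Fintype.sum_sum_type, Fin.sum_univ_two, Fin.sum_univ_one, hn, hn',
            Matrix.fromBlocks, Matrix.mul_apply]
          field_simp
          ring
  · have hc : 0 < Real.sqrt 2 * (η * (-r)) :=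
      mul_pos (Real.sqrt_pos.mpr (by norm_num)) (mul_pos hη (by linarith))
    refine ⟨Real.sqrt 2 * (η * (-r)), hc, -r, by linarith, ?_⟩
    intro t ht
    have habs : |(η*r)*r^t| = (η * (-r)) * (-r)^t := by
      rw [abs_mul, abs_pow, abs_of_neg hr0, abs_of_neg (mul_neg_of_pos_of_neg hη hr0)]
      ring
    have hD : ∀ B : Matrix (Fin 1) (Fin 2) ℝ, B = A1 ∨ B = A2 →
        Real.sqrt 2 * (η * (-r)) * (-r)^t ≤ Delta B (Z t) := by
      intro B hB
      have hv : (fun j : Fin 1 => Z t (Sum.inl (Sum.inl j))) = (fun _ => (η*r)*r^t) := by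
        funext j; simp [hZdef]
      have hx : ∑ i, (Bᵀ.mulVec (fun _ : Fin 1 => (η*r)*r^t)) i ^ 2 = 2 * ((η*r)*r^t)^2 := by
        rcases hB with h | h <;> subst h <;>
          (simp [A1, A2, Matrix.mulVec, dotProduct, Fin.sum_univ_two,
            Fin.sum_univ_one]; ring)
      have h1 : vnorm2 (Bᵀ.mulVec fun j => Z t (Sum.inl (Sum.inl j)))
          = Real.sqrt 2 * (η * (-r)) * (-r)^t := by
        rw [hv]; unfold vnorm2
        rw [hx, Real.sqrt_mul (by norm_num), Real.sqrt_sq_eq_abs, habs]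
        ring
      have h2 : 0 ≤ vnorm2 (B.mulVec fun j => Z t (Sum.inl (Sum.inr j))) :=
        Real.sqrt_nonneg _
      unfold Delta
      rw [h1]
      linarith
    have hmem : t ∈ Finset.Icc 1 t := by simp [Finset.mem_Icc]; omega
    constructor
    · exact le_trans (hD A1 (Or.inl rfl)) (Finset.le_sup' (fun s => Delta A1 (Z s)) hmem)
    · exact le_trans (hD A2 (Or.inr rfl)) (Finset.le_sup' (fun s => Delta A2 (Z s)) hmem)
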